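/- Let 𝒪 be an algebra of observables on a nonempty set Ω, P an observable probability, F a zero set, U a co-zero set, and X ∈ 𝒪 with 1_F ≤ X ≤ 1_U pointwise. Then X is integrable and P(F) ≤ ∫ X dP ≤ P(U). -/

import Mathlib

open Filter MeasureTheory Topology

variable {Ω : Type*}

/-- A family `𝒪` of real functions on `Ω` is an algebra of observables: for every `n ≥ 1`,
all `X₁, …, Xₙ ∈ 𝒪` and every `φ` continuous on the image of `(X₁, …, Xₙ)`,
the composite `ω ↦ φ (X₁ ω, …, Xₙ ω)` belongs to `𝒪`. -/
def IsObsAlg (o : Set (Ω → ℝ)) : Prop :=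
  ∀ n : ℕ, 0 < n → ∀ X : Fin n → Ω → ℝ, (∀ i, X i ∈ o) →
    ∀ φ : (Fin n → ℝ) → ℝ,
      ContinuousOn φ (Set.range fun ω => fun i => X i ω) →
      (fun ω => φ fun i => X i ω) ∈ o

/-- `F ⊆ Ω` is a zero set if `F = X⁻¹({0})` for some `X ∈ 𝒪`. -/
def IsZeroSet (o : Set (Ω → ℝ)) (F : Set Ω) : Prop :=
  ∃ X ∈ o, F = X ⁻¹' {0}

/-- A co-zero set is the complement of a zero set. -/
def IsCozeroSet (o : Set (Ω → ℝ)) (U : Set Ω) : Prop :=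
  IsZeroSet o Uᶜ

/-- The observable sets are the zero sets together with the co-zero sets. -/
def IsObsSet (o : Set (Ω → ℝ)) (A : Set Ω) : Prop :=
  IsZeroSet o A ∨ IsCozeroSet o A

/-- An observable probability: additive on disjoint observable sets with observable union,
nonnegative on observable sets, normalized, with monotone convergence along increasing
sequences of co-zero sets whose union is a co-zero set. -/
def IsObsProb (o : Set (Ω → ℝ)) (P : Set Ω → ℝ) : Prop :=
  (∀ A B : Set Ω, IsObsSet o A → IsObsSet o B → Disjoint A B →
    IsObsSet o (A ∪ B) → P (A ∪ B) = P A + P B) ∧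
  (∀ A : Set Ω, IsObsSet o A → 0 ≤ P A) ∧
  (P Set.univ = 1) ∧
  (∀ (U : ℕ → Set Ω) (V : Set Ω), (∀ i, IsCozeroSet o (U i)) → Monotone U →
    IsCozeroSet o V → (⋃ i, U i) = V →
    Tendsto (fun i => P (U i)) atTop (𝓝 (P V)))

/-- `μ` is the distribution of `X` under `P`: a Borel probability measure on `ℝ` with
`μ U = P (X ⁻¹' U)` for every open `U ⊆ ℝ`. -/
def IsDistribution (o : Set (Ω → ℝ)) (P : Set Ω → ℝ) (X : Ω → ℝ)
    (μ : Measure ℝ) : Prop :=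
  IsProbabilityMeasure μ ∧
  ∀ U : Set ℝ, IsOpen U → μ U = ENNReal.ofReal (P (X ⁻¹' U))

/-- Membership in `𝒪^∞`: a bounded member of `𝒪`. -/
def MemBdd (o : Set (Ω → ℝ)) (X : Ω → ℝ) : Prop :=
  X ∈ o ∧ ∃ M : ℝ, ∀ ω, |X ω| ≤ M

/-- The closed algebra `𝒜_X` generated by `X`: all `φ ∘ X` with `φ : ℝ → ℝ` continuous
(equivalent, by Tietze extension, to continuous functions on the closure of the image). -/
def ClosedAlg (X : Ω → ℝ) : Set (Ω → ℝ) :=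
  {Y | ∃ φ : ℝ → ℝ, Continuous φ ∧ Y = φ ∘ X}

/-- Positivity of a functional on `𝒪^∞`. -/
def PositiveFunc (o : Set (Ω → ℝ)) (E : (Ω → ℝ) → ℝ) : Prop :=
  ∀ X, MemBdd o X → (∀ ω, 0 ≤ X ω) → 0 ≤ E X

/-- Quasi-linearity: `E` is linear on each `𝒜_X`, `X ∈ 𝒪^∞`. -/
def QuasiLinear (o : Set (Ω → ℝ)) (E : (Ω → ℝ) → ℝ) : Prop :=
  ∀ X, MemBdd o X → ∀ Y ∈ ClosedAlg X, ∀ Z ∈ ClosedAlg X, ∀ a b : ℝ,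
    E (fun ω => a * Y ω + b * Z ω) = a * E Y + b * E Z

/-- `X ⪯ U` : there is a zero set `F` with `X ≤ 1_F` pointwise and `F ⊆ U`. -/
def PrecU (o : Set (Ω → ℝ)) (X : Ω → ℝ) (U : Set Ω) : Prop :=
  ∃ F : Set Ω, IsZeroSet o F ∧ (∀ ω, X ω ≤ F.indicator (fun _ => (1:ℝ)) ω) ∧ F ⊆ U

/-- An observable expectation: quasi-linear, positive, normalized, with monotone
convergence along increasing sequences in `𝒪^∞` converging pointwise in `𝒪^∞`. -/
def IsObsExp (o : Set (Ω → ℝ)) (E : (Ω → ℝ) → ℝ) : Prop :=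
  QuasiLinear o E ∧ PositiveFunc o E ∧ E (fun _ => 1) = 1 ∧
  (∀ (X : ℕ → Ω → ℝ) (Y : Ω → ℝ), (∀ n, MemBdd o (X n)) → MemBdd o Y →
    (∀ n ω, X n ω ≤ X (n+1) ω) →
    (∀ ω, Tendsto (fun n => X n ω) atTop (𝓝 (Y ω))) →
    Tendsto (fun n => E (X n)) atTop (𝓝 (E Y)))

/-- A quasi-additive probability: axioms (I)-(III) of an observable probability
together with inner regularity (IV'): `P U = sup {P F : F zero set, F ⊆ U}`. -/
def IsQuasiAddProb (o : Set (Ω → ℝ)) (P : Set Ω → ℝ) : Prop :=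
  (∀ A B : Set Ω, IsObsSet o A → IsObsSet o B → Disjoint A B →
    IsObsSet o (A ∪ B) → P (A ∪ B) = P A + P B) ∧
  (∀ A : Set Ω, IsObsSet o A → 0 ≤ P A) ∧
  (P Set.univ = 1) ∧
  (∀ U : Set Ω, IsCozeroSet o U →
    P U = sSup {r | ∃ F : Set Ω, IsZeroSet o F ∧ F ⊆ U ∧ r = P F})


section Aux

variable {o : Set (Ω → ℝ)} {P : Set Ω → ℝ}

lemma obs_comp (hO : IsObsAlg o) {X : Ω → ℝ} (hX : X ∈ o)
    (ψ : ℝ → ℝ) (hψ : Continuous ψ) : (fun ω => ψ (X ω)) ∈ o :=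
  hO 1 one_pos (fun _ => X) (fun _ => hX) (fun v => ψ (v 0))
    ((hψ.comp (continuous_apply 0)).continuousOn)

lemma obs_comp2 (hO : IsObsAlg o) {X Y : Ω → ℝ} (hX : X ∈ o) (hY : Y ∈ o)
    (ψ : ℝ → ℝ → ℝ) (hψ : Continuous fun p : ℝ × ℝ => ψ p.1 p.2) :
    (fun ω => ψ (X ω) (Y ω)) ∈ o := by
  have h := hO 2 two_pos ![X, Y]
    (fun i => by match i with | 0 => exact hX | 1 => exact hY)
    (fun v => ψ (v 0) (v 1))
    (by
      have hg : Continuous (fun v : Fin 2 → ℝ => (v 0, v 1)) :=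
        (continuous_apply (0 : Fin 2)).prodMk (continuous_apply (1 : Fin 2))
      have hc : Continuous (fun v : Fin 2 → ℝ => ψ (v 0) (v 1)) := hψ.comp hg
      exact hc.continuousOn)
  simpa using h

lemma zero_empty (hO : IsObsAlg o) {X : Ω → ℝ} (hX : X ∈ o) :
    IsZeroSet o (∅ : Set Ω) :=
  ⟨fun ω => 1, obs_comp hO hX (fun _ => 1) continuous_const, by ext ω; simp⟩

lemma cozero_univ (hO : IsObsAlg o) {X : Ω → ℝ} (hX : X ∈ o) :
    IsCozeroSet o (Set.univ : Set Ω) := by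
  rw [IsCozeroSet, Set.compl_univ]; exact zero_empty hO hX

lemma zero_inter (hO : IsObsAlg o) {A B : Set Ω} (hA : IsZeroSet o A)
    (hB : IsZeroSet o B) : IsZeroSet o (A ∩ B) := by
  obtain ⟨Y, hY, rfl⟩ := hA
  obtain ⟨Z, hZ, rfl⟩ := hB
  refine ⟨fun ω => |Y ω| + |Z ω|,
    obs_comp2 hO hY hZ (fun a b => |a| + |b|)
      ((continuous_abs.comp continuous_fst).add (continuous_abs.comp continuous_snd)), ?_⟩
  ext ω
  simp only [Set.mem_inter_iff, Set.mem_preimage, Set.mem_singleton_iff]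
  constructor
  · rintro ⟨h1, h2⟩; simp [h1, h2]
  · intro h
    have h1 : |Y ω| = 0 ∧ |Z ω| = 0 := by
      constructor <;> nlinarith [abs_nonneg (Y ω), abs_nonneg (Z ω)]
    exact ⟨abs_eq_zero.mp h1.1, abs_eq_zero.mp h1.2⟩

lemma zero_union (hO : IsObsAlg o) {A B : Set Ω} (hA : IsZeroSet o A)
    (hB : IsZeroSet o B) : IsZeroSet o (A ∪ B) := by
  obtain ⟨Y, hY, rfl⟩ := hA
  obtain ⟨Z, hZ, rfl⟩ := hB
  refine ⟨fun ω => Y ω * Z ω,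
    obs_comp2 hO hY hZ (fun a b => a * b) (continuous_fst.mul continuous_snd), ?_⟩
  ext ω
  simp [mul_eq_zero]

lemma P_empty (hO : IsObsAlg o) (hP : IsObsProb o P) {X : Ω → ℝ} (hX : X ∈ o) :
    P ∅ = 0 := by
  have hobs : IsObsSet o (∅ : Set Ω) := Or.inl (zero_empty hO hX)
  have h := hP.1 ∅ ∅ hobs hobs (by simp) (by simpa using hobs)
  simp only [Set.union_empty] at h
  linarith

lemma P_mono_zc (hO : IsObsAlg o) (hP : IsObsProb o P) {F U : Set Ω}
    (hF : IsZeroSet o F) (hU : IsCozeroSet o U) (hFU : F ⊆ U) : P F ≤ P U := by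
  have hz : IsZeroSet o (F ∪ Uᶜ) := zero_union hO hF hU
  have hco : IsCozeroSet o (U \ F) := by
    rw [IsCozeroSet, Set.diff_eq, Set.compl_inter, compl_compl, Set.union_comm]
    exact hz
  have hdis : Disjoint F (U \ F) := Set.disjoint_sdiff_right
  have hun : F ∪ (U \ F) = U := Set.union_diff_cancel hFU
  have hadd := hP.1 F (U \ F) (Or.inl hF) (Or.inr hco) hdis
    (by rw [hun]; exact Or.inr hU)
  rw [hun] at hadd
  have hpos := hP.2.1 (U \ F) (Or.inr hco)
  linarith

lemma P_mono_cz (hO : IsObsAlg o) (hP : IsObsProb o P) {W Z : Set Ω}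
    (hW : IsCozeroSet o W) (hZ : IsZeroSet o Z) (hWZ : W ⊆ Z) : P W ≤ P Z := by
  have hz : IsZeroSet o (Z \ W) := by
    rw [Set.diff_eq]; exact zero_inter hO hZ hW
  have hdis : Disjoint W (Z \ W) := Set.disjoint_sdiff_right
  have hun : W ∪ (Z \ W) = Z := Set.union_diff_cancel hWZ
  have hadd := hP.1 W (Z \ W) (Or.inr hW) (Or.inl hz) hdis
    (by rw [hun]; exact Or.inl hZ)
  rw [hun] at hadd
  have hpos := hP.2.1 (Z \ W) (Or.inl hz)
  linarith

lemma cozero_Ioi (hO : IsObsAlg o) {X : Ω → ℝ} (hX : X ∈ o) (a : ℝ) :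
    IsCozeroSet o (X ⁻¹' Set.Ioi a) := by
  refine ⟨fun ω => max (X ω - a) 0,
    obs_comp hO hX (fun t => max (t - a) 0) (by continuity), ?_⟩
  ext ω
  simp only [Set.mem_compl_iff, Set.mem_preimage, Set.mem_Ioi, not_lt,
    Set.mem_singleton_iff]
  constructor
  · intro h; exact max_eq_right (by linarith)
  · intro h
    have := le_max_left (X ω - a) 0
    rw [h] at this; linarith

lemma zero_Ici (hO : IsObsAlg o) {X : Ω → ℝ} (hX : X ∈ o) (a : ℝ) :
    IsZeroSet o (X ⁻¹' Set.Ici a) := by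
  refine ⟨fun ω => min (X ω - a) 0,
    obs_comp hO hX (fun t => min (t - a) 0) (by continuity), ?_⟩
  ext ω
  simp only [Set.mem_preimage, Set.mem_Ici, Set.mem_singleton_iff]
  constructor
  · intro h; exact min_eq_right (by linarith)
  · intro h
    have := min_le_left (X ω - a) 0
    rw [h] at this; linarith

end Aux

/-- if `1_F ≤ X ≤ 1_U` then `X` is integrable and
`P F ≤ ∫ X dP ≤ P U`. -/
theorem prob_le_integral_le_prob {Ω : Type*} [Nonempty Ω]
    (o : Set (Ω → ℝ)) (hO : IsObsAlg o) (P : Set Ω → ℝ) (hP : IsObsProb o P)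
    (F U : Set Ω) (hF : IsZeroSet o F) (hU : IsCozeroSet o U)
    (X : Ω → ℝ) (hX : X ∈ o)
    (h1 : ∀ ω, F.indicator (fun _ => (1:ℝ)) ω ≤ X ω)
    (h2 : ∀ ω, X ω ≤ U.indicator (fun _ => (1:ℝ)) ω)
    (μ : Measure ℝ) (hμ : IsDistribution o P X μ) :
    Integrable id μ ∧ P F ≤ (∫ t, t ∂μ) ∧ (∫ t, t ∂μ) ≤ P U := by
  obtain ⟨hprob, hdist⟩ := hμ
  haveI := hprob
  -- pointwise bounds
  have hX0 : ∀ ω, 0 ≤ X ω := fun ω =>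
    le_trans (Set.indicator_nonneg (fun _ _ => zero_le_one) ω) (h1 ω)
  have hX1 : ∀ ω, X ω ≤ 1 := by
    intro ω
    refine le_trans (h2 ω) ?_
    by_cases h : ω ∈ U
    · rw [Set.indicator_of_mem h]
    · rw [Set.indicator_of_notMem h]; exact zero_le_one
  -- μ is supported in [0,1]
  have hPempty : P ∅ = 0 := P_empty hO hP hX
  have hcompl : μ (Set.Icc (0:ℝ) 1)ᶜ = 0 := by
    rw [hdist _ isClosed_Icc.isOpen_compl]
    have hpre : X ⁻¹' (Set.Icc (0:ℝ) 1)ᶜ = ∅ := by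
      ext ω
      simp only [Set.mem_preimage, Set.mem_compl_iff, Set.mem_Icc, Set.mem_empty_iff_false,
        iff_false, not_not]
      exact ⟨hX0 ω, hX1 ω⟩
    rw [hpre, hPempty, ENNReal.ofReal_zero]
  have ae_mem : ∀ᵐ t ∂μ, t ∈ Set.Icc (0:ℝ) 1 := by
    rw [ae_iff]
    convert hcompl using 2
    rfl
  have hid_int : Integrable (id : ℝ → ℝ) μ := by
    refine (integrable_const (1:ℝ)).mono' measurable_id.aestronglyMeasurable ?_
    filter_upwards [ae_mem] with t ht
    rw [id_eq, Real.norm_eq_abs, abs_le]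
    exact ⟨by linarith [ht.1], ht.2⟩
  have hid_int' : Integrable (fun t : ℝ => t) μ := hid_int
  have hint_nonneg : 0 ≤ ∫ t, t ∂μ := by
    apply integral_nonneg_of_ae
    filter_upwards [ae_mem] with t ht
    exact ht.1
  -- lower bound key
  have key_low : ∀ δ : ℝ, 0 < δ → δ < 1 → (1 - δ) * P F ≤ ∫ t, t ∂μ := by
    intro δ hδ0 hδ1
    set c := 1 - δ with hc
    have hc0 : 0 < c := by simp only [hc]; linarith
    have hc1 : c < 1 := by simp only [hc]; linarith
    have hcoz := cozero_Ioi hO hX c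
    have hmono : P F ≤ (μ (Set.Ioi c)).toReal := by
      have hF_sub : F ⊆ X ⁻¹' Set.Ioi c := by
        intro ω hω
        have hh := h1 ω
        rw [Set.indicator_of_mem hω] at hh
        exact lt_of_lt_of_le hc1 hh
      have hle := P_mono_zc hO hP hF hcoz hF_sub
      rw [hdist _ isOpen_Ioi, ENNReal.toReal_ofReal (hP.2.1 _ (Or.inr hcoz))]
      exact hle
    have hint : ∫ t, (Set.Ioi c).indicator (fun _ => c) t ∂μ ≤ ∫ t, t ∂μ := by
      apply integral_mono_ae ((integrable_const c).indicator measurableSet_Ioi) hid_int'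
      filter_upwards [ae_mem] with t ht
      by_cases h : t ∈ Set.Ioi c
      · rw [Set.indicator_of_mem h]; exact le_of_lt h
      · rw [Set.indicator_of_notMem h]; exact ht.1
    rw [integral_indicator_const _ measurableSet_Ioi, smul_eq_mul] at hint
    have hcmul : c * P F ≤ c * (μ (Set.Ioi c)).toReal :=
      mul_le_mul_of_nonneg_left hmono hc0.le
    calc (1 - δ) * P F = c * P F := by rw [hc]
      _ ≤ c * (μ (Set.Ioi c)).toReal := hcmul
      _ = (μ (Set.Ioi c)).toReal * c := mul_comm _ _
      _ ≤ ∫ t, t ∂μ := hint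
  -- upper bound key
  have key_up : ∀ ε : ℝ, 0 < ε → ∫ t, t ∂μ ≤ P U + ε := by
    intro ε hε
    have hcoz := cozero_Ioi hO hX ε
    have hzer := zero_Ici hO hX ε
    have hμε : (μ (Set.Ioi ε)).toReal ≤ P U := by
      have hsub1 : X ⁻¹' Set.Ioi ε ⊆ X ⁻¹' Set.Ici ε :=
        Set.preimage_mono Set.Ioi_subset_Ici_self
      have hsub2 : X ⁻¹' Set.Ici ε ⊆ U := by
        intro ω hω
        by_contra hωU
        have hh := h2 ω
        rw [Set.indicator_of_notMem hωU] at hh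
        have : (ε:ℝ) ≤ 0 := le_trans hω hh
        linarith
      rw [hdist _ isOpen_Ioi, ENNReal.toReal_ofReal (hP.2.1 _ (Or.inr hcoz))]
      exact le_trans (P_mono_cz hO hP hcoz hzer hsub1)
        (P_mono_zc hO hP hzer hU hsub2)
    have hind_int : Integrable ((Set.Ioi ε).indicator (fun _ => (1:ℝ))) μ :=
      (integrable_const (1:ℝ)).indicator measurableSet_Ioi
    have hint : ∫ t, t ∂μ ≤ ∫ t, ((Set.Ioi ε).indicator (fun _ => (1:ℝ)) t + ε) ∂μ := by
      apply integral_mono_ae hid_int' (hind_int.add (integrable_const ε))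
      filter_upwards [ae_mem] with t ht
      show t ≤ (Set.Ioi ε).indicator (fun _ => (1:ℝ)) t + ε
      by_cases h : t ∈ Set.Ioi ε
      · rw [Set.indicator_of_mem h]; linarith [ht.2]
      · rw [Set.indicator_of_notMem h]
        have : t ≤ ε := le_of_not_gt h
        linarith
    rw [integral_add hind_int (integrable_const ε),
      integral_indicator_const _ measurableSet_Ioi, integral_const,
      probReal_univ, smul_eq_mul, smul_eq_mul, one_mul, mul_one, measureReal_def] at hint
    linarith
  -- P F bounds
  have hPF0 : 0 ≤ P F := hP.2.1 F (Or.inl hF)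
  have hPF1 : P F ≤ 1 := by
    have := P_mono_zc hO hP hF (cozero_univ hO hX) (Set.subset_univ F)
    rw [hP.2.2.1] at this
    exact this
  refine ⟨hid_int, ?_, ?_⟩
  · apply le_of_forall_pos_le_add
    intro ε hε
    set δ := min ε (1/2) with hδ
    have hδ0 : 0 < δ := lt_min hε (by norm_num)
    have hδ1 : δ < 1 := lt_of_le_of_lt (min_le_right _ _) (by norm_num)
    have hδε : δ ≤ ε := min_le_left _ _
    have := key_low δ hδ0 hδ1
    nlinarith
  · apply le_of_forall_pos_le_add
    intro ε hε
    exact key_up ε hε
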